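/- arXiv:1302.2310 — 4 statements merged into one kernel-verified Lean document; each statement's English description precedes it below -/
import Mathlib

section
/- Let n ≥ 1 and let 1 ≤ r ≤ n. Then the sum over all permutations σ in the symmetric group S_n of fix(σ)^r equals n! · B_r, where B_r = Σ_{i=0}^{r} S(r,i) is the r-th Bell number. Equivalently, the r-th moment of the number of fixed points of a uniformly random permutation of n letters is the r-th Bell number; representation-theoretically, this is the multiplicity of the trivial representation in the r-th tensor power of the n-dimensional permutation representation of S_n. -/
/-- Stirling numbers of the second kind. -/
def stirling : ℕ → ℕ → ℕ
  | 0, 0 => 1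
  | 0, _ + 1 => 0
  | _ + 1, 0 => 0
  | n + 1, k + 1 => (k + 1) * stirling n (k + 1) + stirling n k

/-- The `r`-th Bell number, `B_r = Σ_{i=0}^{r} S(r,i)`. -/
def bell (r : ℕ) : ℕ := ∑ i ∈ Finset.range (r + 1), stirling r i

/-- The number of fixed points of a permutation of `Fin n`. -/
def fixCount {n : ℕ} (σ : Equiv.Perm (Fin n)) : ℕ :=
  (Finset.univ.filter fun x => σ x = x).card

lemma stirling_eq_zero_of_lt : ∀ {n k : ℕ}, n < k → stirling n k = 0 := by
  intro n
  induction n with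
  | zero => intro k hk; match k, hk with | k + 1, _ => rfl
  | succ n ih =>
    intro k hk
    match k, hk with
    | k + 1, hk =>
      show (k + 1) * stirling n (k + 1) + stirling n k = 0
      rw [ih (by omega), ih (by omega)]
      simp

lemma stirling_succ_eq (n : ℕ) : ∀ k, stirling (n + 1) (k + 1) =
    ∑ j ∈ Finset.range (n + 1), n.choose j * stirling j k := by
  induction n with
  | zero =>
    intro k
    show (k + 1) * stirling 0 (k + 1) + stirling 0 k = _
    simp [stirling]
  | succ n ih =>
    intro k
    have expand : ∑ j ∈ Finset.range (n + 2), (n + 1).choose j * stirling j k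
        = (∑ j ∈ Finset.range (n + 1), n.choose j * stirling (j + 1) k)
          + ∑ j ∈ Finset.range (n + 1), n.choose j * stirling j k := by
      rw [Finset.sum_range_succ' (fun j => (n + 1).choose j * stirling j k)]
      have : ∀ j ∈ Finset.range (n + 1), (n + 1).choose (j + 1) * stirling (j + 1) k
          = n.choose j * stirling (j + 1) k + n.choose (j + 1) * stirling (j + 1) k := by
        intro j _
        rw [Nat.choose_succ_succ, add_mul]
      rw [Finset.sum_congr rfl this, Finset.sum_add_distrib]
      have : ((n + 1).choose 0 * stirling 0 k)
          = n.choose 0 * stirling 0 k := by norm_num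
      rw [this, add_assoc]
      congr 1
      rw [← Finset.sum_range_succ' (fun j => n.choose j * stirling j k)]
      rw [Finset.sum_range_succ]
      rw [Nat.choose_succ_self, zero_mul, add_zero]
    match k with
    | 0 =>
      show (0 + 1) * stirling (n + 1) (0 + 1) + stirling (n + 1) 0 = _
      rw [expand]
      have : ∀ j ∈ Finset.range (n + 1), n.choose j * stirling (j + 1) 0 = 0 := by
        intro j _; rfl
      rw [Finset.sum_congr rfl this, Finset.sum_const_zero, zero_add, ← ih 0]
      show (0 + 1) * stirling (n + 1) 1 + 0 = _
      ring
    | k + 1 =>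
      show (k + 2) * stirling (n + 1) (k + 2) + stirling (n + 1) (k + 1) = _
      rw [expand, ih (k + 1), ih k]
      have : ∀ j ∈ Finset.range (n + 1), n.choose j * stirling (j + 1) (k + 1)
          = (k + 1) * (n.choose j * stirling j (k + 1)) + n.choose j * stirling j k := by
        intro j _
        show n.choose j * ((k + 1) * stirling j (k + 1) + stirling j k) = _
        ring
      rw [Finset.sum_congr rfl this, Finset.sum_add_distrib, ← Finset.mul_sum]
      ring
    
lemma bell_succ (n : ℕ) : bell (n + 1) =
    ∑ j ∈ Finset.range (n + 1), n.choose j * bell j := by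
  unfold bell
  rw [Finset.sum_range_succ' (fun i => stirling (n + 1) i)]
  have h0 : stirling (n + 1) 0 = 0 := rfl
  rw [h0, add_zero]
  have : ∀ i ∈ Finset.range (n + 1), stirling (n + 1) (i + 1)
      = ∑ j ∈ Finset.range (n + 1), n.choose j * stirling j i := by
    intro i _; exact stirling_succ_eq n i
  rw [Finset.sum_congr rfl this, Finset.sum_comm]
  refine Finset.sum_congr rfl ?_
  intro j hj
  rw [← Finset.mul_sum]
  congr 1
  rw [Finset.mem_range] at hj
  -- ∑ i ∈ range (n+1), stirling j i = ∑ i ∈ range (j+1), stirling j i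
  symm
  apply Finset.sum_subset
  · intro i hi; rw [Finset.mem_range] at *; omega
  · intro i _ hi
    rw [Finset.mem_range] at hi
    exact stirling_eq_zero_of_lt (by omega)

open Equiv in
lemma optionCongr_removeNone {α : Type*} (π : Perm (Option α)) (h : π none = none) :
    Equiv.optionCongr (Equiv.removeNone π) = π := by
  refine Equiv.ext fun o => ?_
  match o with
  | none => simp [h]
  | some a =>
    have h2 : ∃ b, π (some a) = some b := by
      cases hb : π (some a) with
      | none =>
        exact absurd (π.injective (hb.trans h.symm)) (by simp)
      | some b => exact ⟨b, rfl⟩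
    have := Equiv.removeNone_some π h2
    simpa using this

open Equiv Finset in
lemma inner_sum' (m r : ℕ) (x : Fin (m + 1)) :
    ∑ σ ∈ univ.filter (fun σ : Perm (Fin (m + 1)) => σ x = x), fixCount σ ^ r
      = ∑ τ : Perm (Fin m), (fixCount τ + 1) ^ r := by
  set e : Fin (m + 1) ≃ Option (Fin m) := finSuccEquiv' x with he
  symm
  refine Finset.sum_nbij' (i := fun τ => (e.permCongr).symm τ.optionCongr)
    (j := fun σ => Equiv.removeNone (e.permCongr σ)) ?_ ?_ ?_ ?_ ?_
  · intro τ _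
    rw [mem_filter]
    refine ⟨mem_univ _, ?_⟩
    show e.symm (τ.optionCongr (e x)) = x
    rw [he]
    rw [finSuccEquiv'_at]
    simp
  · intro σ _; exact mem_univ _
  · intro τ _
    simp only [Equiv.apply_symm_apply]
    exact Equiv.removeNone_optionCongr τ
  · intro σ hσ
    rw [mem_filter] at hσ
    have hnone : (e.permCongr σ) none = none := by
      show e (σ (e.symm none)) = none
      rw [he, finSuccEquiv'_symm_none, hσ.2, finSuccEquiv'_at]
    show e.permCongr.symm (optionCongr (Equiv.removeNone (e.permCongr σ))) = σ
    rw [optionCongr_removeNone _ hnone]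
    exact Equiv.symm_apply_apply _ _
  · intro τ _
    congr 1
    -- fixCount (E τ) = fixCount τ + 1
    unfold fixCount
    have hcond : ∀ y : Fin (m + 1),
        ((e.permCongr).symm τ.optionCongr y = y) ↔ (τ.optionCongr (e y) = e y) := by
      intro y
      show e.symm (τ.optionCongr (e y)) = y ↔ _
      constructor
      · intro h; exact (Equiv.symm_apply_eq e).mp h
      · intro h; rw [h]; exact e.symm_apply_apply y
    have : (univ.filter fun y : Fin (m + 1) => (e.permCongr).symm τ.optionCongr y = y).card
        = (univ.filter fun o : Option (Fin m) => τ.optionCongr o = o).card := by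
      rw [Finset.filter_congr (fun y _ => by rw [hcond y])]
      rw [Finset.card_filter, Finset.card_filter]
      exact Equiv.sum_comp e (fun o => if τ.optionCongr o = o then 1 else 0)
    have hopt : (Finset.univ.filter fun o : Option (Fin m) => τ.optionCongr o = o).card
        = (Finset.univ.filter fun z : Fin m => τ z = z).card + 1 := by
      rw [Finset.card_filter, Finset.card_filter, Fintype.sum_option]
      simp [add_comm]
    rw [this, hopt]

open Equiv Finset in
lemma key_step (m r : ℕ) :
    ∑ σ : Perm (Fin (m + 1)), fixCount σ ^ (r + 1)
      = (m + 1) * ∑ τ : Perm (Fin m), (fixCount τ + 1) ^ r := by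
  have step1 : ∀ σ : Perm (Fin (m + 1)), fixCount σ ^ (r + 1)
      = ∑ x : Fin (m + 1), if σ x = x then fixCount σ ^ r else 0 := by
    intro σ
    rw [← Finset.sum_filter]
    rw [Finset.sum_const, smul_eq_mul]
    rw [pow_succ, mul_comm]
    rfl
  rw [Finset.sum_congr rfl (fun σ _ => step1 σ), Finset.sum_comm]
  have : ∀ x : Fin (m + 1),
      (∑ σ : Perm (Fin (m + 1)), if σ x = x then fixCount σ ^ r else 0)
        = ∑ τ : Perm (Fin m), (fixCount τ + 1) ^ r := by
    intro x
    rw [← Finset.sum_filter]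
    exact inner_sum' m r x
  rw [Finset.sum_congr rfl (fun x _ => this x), Finset.sum_const, smul_eq_mul]
  simp

open Equiv Finset in
lemma main_aux : ∀ r n : ℕ, r ≤ n →
    ∑ σ : Perm (Fin n), fixCount σ ^ r = Nat.factorial n * bell r := by
  intro r
  induction r using Nat.strong_induction_on with
  | _ r ih =>
    match r with
    | 0 =>
      intro n _
      simp only [pow_zero, Finset.sum_const, smul_eq_mul, mul_one, Finset.card_univ]
      rw [Fintype.card_perm, Fintype.card_fin]
      simp [bell, stirling]
    | r + 1 =>
      intro n hn
      obtain ⟨m, rfl⟩ : ∃ m, n = m + 1 := ⟨n - 1, by omega⟩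
      rw [key_step m r]
      have hexp : ∀ τ : Perm (Fin m), (fixCount τ + 1) ^ r
          = ∑ k ∈ Finset.range (r + 1), fixCount τ ^ k * r.choose k := by
        intro τ
        rw [add_pow]
        simp
      rw [Finset.sum_congr rfl (fun τ _ => hexp τ), Finset.sum_comm]
      have hterm : ∀ k ∈ Finset.range (r + 1),
          (∑ τ : Perm (Fin m), fixCount τ ^ k * r.choose k)
            = Nat.factorial m * bell k * r.choose k := by
        intro k hk
        rw [Finset.mem_range] at hk
        rw [← Finset.sum_mul, ih k (by omega) m (by omega)]
      rw [Finset.sum_congr rfl hterm]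
      rw [bell_succ, Finset.mul_sum, Finset.mul_sum]
      refine Finset.sum_congr rfl ?_
      intro k _
      rw [Nat.factorial_succ]
      ring

theorem sum_fix_pow_eq_factorial_mul_bell (n r : ℕ) (hn : 1 ≤ n)
    (hr1 : 1 ≤ r) (hrn : r ≤ n) :
    ∑ σ : Equiv.Perm (Fin n), (fixCount σ) ^ r = Nat.factorial n * bell r :=
  main_aux r n hrn
end

section
/- Let n ≥ 2 and let 1 ≤ r ≤ n−1. Then Σ_{σ ∈ S_n} fix(σ)^r · (fix(σ) − 1) = n! · Σ_{i=1}^{r} i · S(r,i). Representation-theoretically, this says the multiplicity of the standard ((n−1)-dimensional) irreducible representation S^{(n−1,1)} of S_n in the r-th tensor power of the n-dimensional permutation representation equals Σ_{i=1}^{r} i · S(r,i). -/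
open Finset Equiv

section aux

variable {α β : Type*} [DecidableEq α] [Fintype α] [DecidableEq β] [Fintype β]

/-- general fixed point count -/
def fcount (σ : Equiv.Perm α) : ℕ := Fintype.card {x // σ x = x}

lemma fixCount_eq_fcount {n : ℕ} (σ : Equiv.Perm (Fin n)) : fixCount σ = fcount σ := by
  rw [fixCount, fcount, Fintype.card_subtype]

lemma fcount_permCongr (e : α ≃ β) (σ : Equiv.Perm α) :
    fcount (e.permCongr σ) = fcount σ := by
  rw [fcount, fcount]
  refine (Fintype.card_congr (e.subtypeEquiv fun a => ?_)).symm
  rw [Equiv.permCongr_apply, Equiv.symm_apply_apply]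
  exact ⟨fun h => by rw [h], fun h => e.injective (by simpa using h)⟩

/-- subtype of Option with predicate true at none -/
def optionSubtypeEquiv {P : Option α → Prop} (h0 : P none) :
    {x : Option α // P x} ≃ Option {a : α // P (some a)} where
  toFun x := match x with
    | ⟨none, _⟩ => none
    | ⟨some a, h⟩ => some ⟨a, h⟩
  invFun o := match o with
    | none => ⟨none, h0⟩
    | some ⟨a, h⟩ => ⟨some a, h⟩
  left_inv := by rintro ⟨(_ | a), h⟩ <;> rfl
  right_inv := by rintro (_ | ⟨a, h⟩) <;> rfl

lemma fcount_optionCongr (τ : Equiv.Perm α) :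
    fcount (τ.optionCongr : Equiv.Perm (Option α)) = fcount τ + 1 := by
  have h0 : (τ.optionCongr : Equiv.Perm (Option α)) none = none := rfl
  have e1 := Fintype.card_congr
    (optionSubtypeEquiv (P := fun x => (τ.optionCongr : Equiv.Perm (Option α)) x = x) h0)
  rw [fcount, e1, Fintype.card_option]
  congr 1
  rw [fcount]
  refine Fintype.card_congr (Equiv.subtypeEquivRight fun a => ?_).symm
  simp

end aux

lemma sum_fix_none {n : ℕ} {M : Type*} [AddCommMonoid M] (g : ℕ → M) :
    ∑ π : Equiv.Perm (Option (Fin n)), (if π none = none then g (fcount π) else 0)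
      = ∑ τ : Equiv.Perm (Fin n), g (fcount τ + 1) := by
  rw [← Equiv.Perm.decomposeOption.symm.sum_comp
    (fun π => if π none = none then g (fcount π) else 0)]
  rw [Fintype.sum_prod_type]
  have hval : ∀ (p : Option (Fin n)) (τ : Equiv.Perm (Fin n)),
      (Equiv.Perm.decomposeOption.symm (p, τ)) none = p := by
    intro p τ
    rw [Equiv.Perm.decomposeOption_symm_apply]
    simp
  have hone : ∀ τ : Equiv.Perm (Fin n),
      (Equiv.refl (Option (Fin n))) * τ.optionCongr = τ.optionCongr := by
    intro τ; ext x; rfl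
  calc ∑ p : Option (Fin n), ∑ τ : Equiv.Perm (Fin n),
        (if (Equiv.Perm.decomposeOption.symm (p, τ)) none = none
          then g (fcount (Equiv.Perm.decomposeOption.symm (p, τ))) else 0)
      = ∑ p : Option (Fin n), (if p = none then
          (∑ τ : Equiv.Perm (Fin n), g (fcount τ + 1)) else 0) := by
        refine Finset.sum_congr rfl fun p _ => ?_
        by_cases hp : p = none
        · subst hp
          rw [if_pos rfl]
          refine Finset.sum_congr rfl fun τ _ => ?_
          rw [if_pos (hval none τ)]
          congr 1
          rw [Equiv.Perm.decomposeOption_symm_apply, Equiv.swap_self, hone,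
            fcount_optionCongr]
        · rw [if_neg hp]
          refine Finset.sum_eq_zero fun τ _ => ?_
          rw [hval, if_neg hp]
    _ = ∑ τ : Equiv.Perm (Fin n), g (fcount τ + 1) := by
        rw [Finset.sum_ite_eq' Finset.univ none]
        simp

lemma key (n : ℕ) {M : Type*} [AddCommMonoid M] (g : ℕ → M) :
    ∑ σ : Equiv.Perm (Fin (n + 1)), fixCount σ • g (fixCount σ)
      = (n + 1) • ∑ τ : Equiv.Perm (Fin n), g (fixCount τ + 1) := by
  have step1 : ∀ σ : Equiv.Perm (Fin (n + 1)), fixCount σ • g (fixCount σ)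
      = ∑ x : Fin (n + 1), (if σ x = x then g (fixCount σ) else 0) := by
    intro σ
    rw [← Finset.sum_filter, Finset.sum_const, fixCount]
  calc ∑ σ : Equiv.Perm (Fin (n + 1)), fixCount σ • g (fixCount σ)
      = ∑ σ : Equiv.Perm (Fin (n + 1)), ∑ x : Fin (n + 1),
          (if σ x = x then g (fixCount σ) else 0) := by
        exact Finset.sum_congr rfl fun σ _ => step1 σ
    _ = ∑ x : Fin (n + 1), ∑ σ : Equiv.Perm (Fin (n + 1)),
          (if σ x = x then g (fixCount σ) else 0) := Finset.sum_comm
    _ = ∑ x : Fin (n + 1), ∑ τ : Equiv.Perm (Fin n), g (fixCount τ + 1) := by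
        refine Finset.sum_congr rfl fun x _ => ?_
        obtain ⟨e, he⟩ : ∃ e : Fin (n + 1) ≃ Option (Fin n), e x = none :=
          ⟨finSuccEquiv' x, finSuccEquiv'_at x⟩
        rw [← (e.permCongr : Equiv.Perm (Fin (n+1)) ≃ Equiv.Perm (Option (Fin n))).symm.sum_comp
          (fun σ => if σ x = x then g (fixCount σ) else 0)]
        have hcond : ∀ π : Equiv.Perm (Option (Fin n)),
            ((e.permCongr.symm π) x = x) ↔ (π none = none) := by
          intro π
          rw [Equiv.permCongr_symm, Equiv.permCongr_apply, Equiv.symm_symm, he]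
          constructor
          · intro h
            have := congrArg e h
            rwa [Equiv.apply_symm_apply, he] at this
          · intro h; rw [h, ← he, Equiv.symm_apply_apply]
        have hfc : ∀ π : Equiv.Perm (Option (Fin n)),
            fixCount (e.permCongr.symm π) = fcount π := by
          intro π
          rw [fixCount_eq_fcount, Equiv.permCongr_symm, fcount_permCongr]
        calc ∑ π : Equiv.Perm (Option (Fin n)),
              (if (e.permCongr.symm π) x = x then g (fixCount (e.permCongr.symm π)) else 0)
            = ∑ π : Equiv.Perm (Option (Fin n)),
              (if π none = none then g (fcount π) else 0) := by
              refine Finset.sum_congr rfl fun π _ => ?_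
              rw [hfc]
              by_cases h : π none = none
              · rw [if_pos ((hcond π).mpr h), if_pos h]
              · rw [if_neg (fun hh => h ((hcond π).mp hh)), if_neg h]
          _ = ∑ τ : Equiv.Perm (Fin n), g (fixCount τ + 1) := by
              rw [sum_fix_none]
              exact Finset.sum_congr rfl fun τ _ => by rw [fixCount_eq_fcount]
    _ = (n + 1) • ∑ τ : Equiv.Perm (Fin n), g (fixCount τ + 1) := by
        rw [Finset.sum_const, Finset.card_univ, Fintype.card_fin]

lemma descFactorial_succ' (k i : ℕ) :
    k.descFactorial (i + 1) = k * (k - 1).descFactorial i := by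
  cases k with
  | zero => simp [Nat.descFactorial_succ]
  | succ t => rw [Nat.succ_descFactorial_succ]; simp

lemma sum_descFactorial_fix : ∀ (i n : ℕ), i ≤ n →
    ∑ σ : Equiv.Perm (Fin n), (fixCount σ).descFactorial i = n.factorial := by
  intro i
  induction i with
  | zero =>
    intro n _
    simp [Finset.card_univ, Fintype.card_perm]
  | succ i ih =>
    intro n hin
    obtain ⟨m, rfl⟩ : ∃ m, n = m + 1 := ⟨n - 1, by omega⟩
    have hkey := key m (fun t => (t - 1).descFactorial i)
    simp only [smul_eq_mul] at hkey
    calc ∑ σ : Equiv.Perm (Fin (m + 1)), (fixCount σ).descFactorial (i + 1)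
        = ∑ σ : Equiv.Perm (Fin (m + 1)), fixCount σ * (fixCount σ - 1).descFactorial i := by
          exact Finset.sum_congr rfl fun σ _ => descFactorial_succ' _ _
      _ = (m + 1) * ∑ τ : Equiv.Perm (Fin m), (fixCount τ + 1 - 1).descFactorial i := hkey
      _ = (m + 1) * m.factorial := by
          congr 1
          simp only [Nat.add_sub_cancel]
          exact ih m (by omega)
      _ = (m + 1).factorial := (Nat.factorial_succ m).symm

lemma stirling_eq_zero : ∀ (m k : ℕ), m < k → stirling m k = 0 := by
  intro m
  induction m with
  | zero => intro k hk; obtain ⟨j, rfl⟩ : ∃ j, k = j + 1 := ⟨k - 1, by omega⟩; rfl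
  | succ m ih =>
    intro k hk
    obtain ⟨j, rfl⟩ : ∃ j, k = j + 1 := ⟨k - 1, by omega⟩
    show (j + 1) * stirling m (j + 1) + stirling m j = 0
    rw [ih (j + 1) (by omega), ih j (by omega)]
    simp

lemma mul_descFactorial (k i : ℕ) :
    k.descFactorial i * k = k.descFactorial (i + 1) + i * k.descFactorial i := by
  rcases le_or_gt i k with h | h
  · rw [Nat.descFactorial_succ, ← Nat.add_mul, mul_comm]
    congr 1
    omega
  · rw [Nat.descFactorial_eq_zero_iff_lt.mpr h,
      Nat.descFactorial_eq_zero_iff_lt.mpr (by omega)]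
    simp

lemma pow_eq_sum_stirling (k : ℕ) : ∀ (m : ℕ),
    k ^ m = ∑ i ∈ Finset.range (m + 1), stirling m i * k.descFactorial i := by
  intro m
  induction m with
  | zero => simp [stirling]
  | succ m ih =>
    have hBC : ∑ i ∈ Finset.range (m + 1), stirling m i * (i * k.descFactorial i)
        = ∑ i ∈ Finset.range (m + 1), (i + 1) * stirling m (i + 1) * k.descFactorial (i + 1) := by
      rw [Finset.sum_range_succ' (fun i => stirling m i * (i * k.descFactorial i)) m,
        Finset.sum_range_succ (fun i => (i + 1) * stirling m (i + 1) * k.descFactorial (i + 1)) m,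
        stirling_eq_zero m (m + 1) (by omega)]
      simp only [zero_mul, mul_zero, add_zero]
      refine Finset.sum_congr rfl fun i _ => ?_
      ring
    calc k ^ (m + 1)
        = ∑ i ∈ Finset.range (m + 1),
            (stirling m i * k.descFactorial (i + 1) + stirling m i * (i * k.descFactorial i)) := by
          rw [pow_succ, ih, Finset.sum_mul]
          refine Finset.sum_congr rfl fun i _ => ?_
          rw [mul_assoc, mul_descFactorial, Nat.mul_add]
      _ = ∑ i ∈ Finset.range (m + 1), stirling m i * k.descFactorial (i + 1)
            + ∑ i ∈ Finset.range (m + 1), stirling m i * (i * k.descFactorial i) :=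
          Finset.sum_add_distrib
      _ = ∑ i ∈ Finset.range (m + 2), stirling (m + 1) i * k.descFactorial i := by
          rw [Finset.sum_range_succ' (fun i => stirling (m + 1) i * k.descFactorial i) (m + 1)]
          have hrec : ∀ i ∈ Finset.range (m + 1),
              stirling (m + 1) (i + 1) * k.descFactorial (i + 1)
              = (i + 1) * stirling m (i + 1) * k.descFactorial (i + 1)
                + stirling m i * k.descFactorial (i + 1) := by
            intro i _
            show ((i + 1) * stirling m (i + 1) + stirling m i) * _ = _
            ring
          rw [Finset.sum_congr rfl hrec, Finset.sum_add_distrib, hBC]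
          have h0 : stirling (m + 1) 0 * k.descFactorial 0 = 0 := rfl
          rw [h0, add_zero]
          ring

lemma sum_fix_pow (n m : ℕ) (hmn : m ≤ n) :
    ∑ σ : Equiv.Perm (Fin n), (fixCount σ) ^ m
      = n.factorial * ∑ i ∈ Finset.range (m + 1), stirling m i := by
  calc ∑ σ : Equiv.Perm (Fin n), (fixCount σ) ^ m
      = ∑ σ : Equiv.Perm (Fin n), ∑ i ∈ Finset.range (m + 1),
          stirling m i * (fixCount σ).descFactorial i :=
        Finset.sum_congr rfl fun σ _ => pow_eq_sum_stirling _ m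
    _ = ∑ i ∈ Finset.range (m + 1), ∑ σ : Equiv.Perm (Fin n),
          stirling m i * (fixCount σ).descFactorial i := Finset.sum_comm
    _ = ∑ i ∈ Finset.range (m + 1), stirling m i * n.factorial := by
        refine Finset.sum_congr rfl fun i hi => ?_
        rw [← Finset.mul_sum, sum_descFactorial_fix i n
          (by have := Finset.mem_range.mp hi; omega)]
    _ = n.factorial * ∑ i ∈ Finset.range (m + 1), stirling m i := by
        rw [← Finset.sum_mul, mul_comm]

lemma stirling_sum_identity (r : ℕ) :
    ∑ i ∈ Finset.range (r + 2), stirling (r + 1) i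
      = ∑ i ∈ Finset.range (r + 1), stirling r i
        + ∑ i ∈ Finset.Icc 1 r, i * stirling r i := by
  have hIcc : ∑ i ∈ Finset.Icc 1 r, i * stirling r i
      = ∑ i ∈ Finset.range r, (i + 1) * stirling r (i + 1) := by
    rw [← Finset.Ico_add_one_right_eq_Icc 1 r, Finset.sum_Ico_eq_sum_range]
    refine Finset.sum_congr (by norm_num) fun i _ => ?_
    rw [add_comm 1 i]
  have htop : ∑ i ∈ Finset.range (r + 1), (i + 1) * stirling r (i + 1)
      = ∑ i ∈ Finset.range r, (i + 1) * stirling r (i + 1) := by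
    rw [Finset.sum_range_succ, stirling_eq_zero r (r + 1) (by omega), mul_zero, add_zero]
  have hrec : ∀ i ∈ Finset.range (r + 1), stirling (r + 1) (i + 1)
      = (i + 1) * stirling r (i + 1) + stirling r i := fun i _ => rfl
  calc ∑ i ∈ Finset.range (r + 2), stirling (r + 1) i
      = ∑ i ∈ Finset.range (r + 1), stirling (r + 1) (i + 1) + stirling (r + 1) 0 :=
        Finset.sum_range_succ' _ (r + 1)
    _ = ∑ i ∈ Finset.range (r + 1), ((i + 1) * stirling r (i + 1) + stirling r i) := by
        rw [Finset.sum_congr rfl hrec]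
        rfl
    _ = ∑ i ∈ Finset.range (r + 1), (i + 1) * stirling r (i + 1)
          + ∑ i ∈ Finset.range (r + 1), stirling r i := Finset.sum_add_distrib
    _ = ∑ i ∈ Finset.range (r + 1), stirling r i + ∑ i ∈ Finset.Icc 1 r, i * stirling r i := by
        rw [htop, hIcc]
        ring

theorem multiplicity_standard_in_tensor_power (n r : ℕ) (hn : 2 ≤ n)
    (hr1 : 1 ≤ r) (hrn : r ≤ n - 1) :
    ∑ σ : Equiv.Perm (Fin n), (fixCount σ : ℤ) ^ r * ((fixCount σ : ℤ) - 1) =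
      (Nat.factorial n : ℤ) * ∑ i ∈ Finset.Icc 1 r, (i : ℤ) * (stirling r i : ℤ) := by
  have hr1n : r + 1 ≤ n := by omega
  have h1 := sum_fix_pow n (r + 1) hr1n
  have h2 := sum_fix_pow n r (by omega)
  have lhs_eq : ∑ σ : Equiv.Perm (Fin n), (fixCount σ : ℤ) ^ r * ((fixCount σ : ℤ) - 1)
      = (∑ σ : Equiv.Perm (Fin n), ((fixCount σ : ℤ)) ^ (r + 1))
        - ∑ σ : Equiv.Perm (Fin n), ((fixCount σ : ℤ)) ^ r := by
    rw [← Finset.sum_sub_distrib]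
    exact Finset.sum_congr rfl fun σ _ => by ring
  rw [lhs_eq]
  have c1 : (∑ σ : Equiv.Perm (Fin n), ((fixCount σ : ℤ)) ^ (r + 1))
      = ((∑ σ : Equiv.Perm (Fin n), (fixCount σ) ^ (r + 1) : ℕ) : ℤ) := by push_cast; rfl
  have c2 : (∑ σ : Equiv.Perm (Fin n), ((fixCount σ : ℤ)) ^ r)
      = ((∑ σ : Equiv.Perm (Fin n), (fixCount σ) ^ r : ℕ) : ℤ) := by push_cast; rfl
  rw [c1, c2, h1, h2, stirling_sum_identity r]
  push_cast
  ring
end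

section
/- Let n ≥ 2. For every integer r with 1 ≤ r < n−1, Σ_{σ ∈ S_n} sgn(σ) · fix(σ)^r = 0, while for r = n−1, Σ_{σ ∈ S_n} sgn(σ) · fix(σ)^{n−1} = n!. Representation-theoretically, this says the multiplicity of the sign representation of S_n in the r-th tensor power of the n-dimensional permutation representation is 0 for 1 ≤ r < n−1 and is 1 for r = n−1. -/
open Finset

private lemma inner_zero {n r : ℕ} (f : Fin r → Fin n) (a b : Fin n) (hab : a ≠ b)
    (ha : ∀ i, f i ≠ a) (hb : ∀ i, f i ≠ b) :
    ∑ σ : Equiv.Perm (Fin n),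
      (if ∀ i, σ (f i) = f i then (Equiv.Perm.sign σ : ℤ) else 0) = 0 := by
  have hswap : ∀ i, Equiv.swap a b (f i) = f i := fun i =>
    Equiv.swap_apply_of_ne_of_ne (ha i) (hb i)
  have key : ∑ σ : Equiv.Perm (Fin n),
      (if ∀ i, σ (f i) = f i then (Equiv.Perm.sign σ : ℤ) else 0)
      = ∑ σ : Equiv.Perm (Fin n),
        (if ∀ i, (σ * Equiv.swap a b) (f i) = f i
          then (Equiv.Perm.sign (σ * Equiv.swap a b) : ℤ) else 0) :=
    (Fintype.sum_equiv (Equiv.mulRight (Equiv.swap a b)) _ _ (fun σ => rfl)).symm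
  have key2 : ∀ σ : Equiv.Perm (Fin n),
      (if ∀ i, (σ * Equiv.swap a b) (f i) = f i
        then (Equiv.Perm.sign (σ * Equiv.swap a b) : ℤ) else 0)
      = - (if ∀ i, σ (f i) = f i then (Equiv.Perm.sign σ : ℤ) else 0) := by
    intro σ
    have hc : (∀ i, (σ * Equiv.swap a b) (f i) = f i) ↔ (∀ i, σ (f i) = f i) := by
      constructor <;> intro h i <;> have := h i <;>
        simpa [Equiv.Perm.mul_apply, hswap i] using this
    have hs : (Equiv.Perm.sign (σ * Equiv.swap a b) : ℤ) = -(Equiv.Perm.sign σ : ℤ) := by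
      simp [Equiv.Perm.sign_swap hab]
    by_cases h : ∀ i, σ (f i) = f i
    · rw [if_pos (hc.mpr h), if_pos h, hs]
    · rw [if_neg (fun hh => h (hc.mp hh)), if_neg h, neg_zero]
  rw [Finset.sum_congr rfl (fun σ _ => key2 σ), Finset.sum_neg_distrib] at key
  linarith

private lemma inner_one {n : ℕ} (hn : 1 ≤ n) (f : Fin (n - 1) → Fin n)
    (hf : Function.Injective f) :
    ∑ σ : Equiv.Perm (Fin n),
      (if ∀ i, σ (f i) = f i then (Equiv.Perm.sign σ : ℤ) else 0) = 1 := by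
  have hcompl : ((Finset.univ.image f)ᶜ : Finset (Fin n)).card = 1 := by
    rw [Finset.card_compl, Finset.card_image_of_injective _ hf]
    simp [Nat.sub_sub_self hn]
  have hiff : ∀ σ : Equiv.Perm (Fin n), (∀ i, σ (f i) = f i) ↔ σ = 1 := by
    intro σ
    constructor
    · intro h
      apply Equiv.ext
      intro x
      show σ x = x
      by_contra hx
      have hx1 : x ∈ (Finset.univ.image f)ᶜ := by
        simp only [Finset.mem_compl, Finset.mem_image, not_exists]
        rintro i ⟨-, hi⟩
        exact hx (hi ▸ h i)
      have hx2 : σ x ∈ (Finset.univ.image f)ᶜ := by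
        simp only [Finset.mem_compl, Finset.mem_image, not_exists]
        rintro i ⟨-, hi⟩
        have h1 : σ (σ x) = σ x := by rw [← hi, h i]
        exact hx (σ.injective h1)
      have := Finset.card_le_one.mp (le_of_eq hcompl) _ hx2 _ hx1
      exact hx this
    · rintro rfl i; rfl
  simp_rw [hiff]
  simp

private lemma main_rewrite (n r : ℕ) :
    ∑ σ : Equiv.Perm (Fin n), (Equiv.Perm.sign σ : ℤ) * (fixCount σ : ℤ) ^ r
    = ∑ f : Fin r → Fin n, ∑ σ : Equiv.Perm (Fin n),
        (if ∀ i, σ (f i) = f i then (Equiv.Perm.sign σ : ℤ) else 0) := by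
  have hpow : ∀ σ : Equiv.Perm (Fin n), (fixCount σ : ℤ) ^ r
      = ∑ f : Fin r → Fin n, (if ∀ i, σ (f i) = f i then (1 : ℤ) else 0) := by
    intro σ
    classical
    have h1 : (Finset.univ.filter fun f : Fin r → Fin n => ∀ i, σ (f i) = f i)
        = Fintype.piFinset (fun _ : Fin r => Finset.univ.filter fun x => σ x = x) := by
      ext g
      simp [Fintype.mem_piFinset]
    rw [Finset.sum_boole, h1, Fintype.card_piFinset]
    simp [fixCount]
  calc ∑ σ : Equiv.Perm (Fin n), (Equiv.Perm.sign σ : ℤ) * (fixCount σ : ℤ) ^ r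
      = ∑ σ : Equiv.Perm (Fin n), ∑ f : Fin r → Fin n,
          (if ∀ i, σ (f i) = f i then (Equiv.Perm.sign σ : ℤ) else 0) := by
        refine Finset.sum_congr rfl fun σ _ => ?_
        rw [hpow σ, Finset.mul_sum]
        exact Finset.sum_congr rfl fun g _ => by split <;> simp
    _ = _ := Finset.sum_comm

theorem multiplicity_sign_in_tensor_power (n : ℕ) (hn : 2 ≤ n) :
    (∀ r : ℕ, 1 ≤ r → r < n - 1 →
        ∑ σ : Equiv.Perm (Fin n), (Equiv.Perm.sign σ : ℤ) * (fixCount σ : ℤ) ^ r = 0) ∧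
      ∑ σ : Equiv.Perm (Fin n), (Equiv.Perm.sign σ : ℤ) * (fixCount σ : ℤ) ^ (n - 1) =
        (Nat.factorial n : ℤ) := by
  classical
  constructor
  · intro r hr1 hr2
    rw [main_rewrite]
    refine Finset.sum_eq_zero fun f _ => ?_
    -- the complement of the range of f has at least two elements
    have himg : (Finset.univ.image f).card ≤ r := by
      calc (Finset.univ.image f).card ≤ (Finset.univ : Finset (Fin r)).card :=
            Finset.card_image_le
        _ = r := by simp
    have hcard : 1 < ((Finset.univ.image f)ᶜ : Finset (Fin n)).card := by
      rw [Finset.card_compl]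
      simp only [Fintype.card_fin]
      omega
    obtain ⟨a, ha, b, hb, hab⟩ := Finset.one_lt_card.mp hcard
    simp only [Finset.mem_compl, Finset.mem_image, not_exists] at ha hb
    exact inner_zero f a b hab (fun i => fun h => ha i ⟨Finset.mem_univ i, h⟩)
      (fun i => fun h => hb i ⟨Finset.mem_univ i, h⟩)
  · rw [main_rewrite]
    have hval : ∀ f : Fin (n - 1) → Fin n,
        (∑ σ : Equiv.Perm (Fin n),
          (if ∀ i, σ (f i) = f i then (Equiv.Perm.sign σ : ℤ) else 0))
        = if Function.Injective f then 1 else 0 := by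
      intro f
      by_cases hf : Function.Injective f
      · rw [if_pos hf]; exact inner_one (by omega) f hf
      · rw [if_neg hf]
        have himg : (Finset.univ.image f).card ≤ n - 2 := by
          have hlt : (Finset.univ.image f).card < (Finset.univ : Finset (Fin (n - 1))).card := by
            refine lt_of_le_of_ne Finset.card_image_le fun h => hf fun x y hxy => ?_
            exact Finset.injOn_of_card_image_eq h (Finset.mem_univ x) (Finset.mem_univ y) hxy
          simp only [Finset.card_univ, Fintype.card_fin] at hlt
          omega
        have hcard : 1 < ((Finset.univ.image f)ᶜ : Finset (Fin n)).card := by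
          rw [Finset.card_compl]
          simp only [Fintype.card_fin]
          omega
        obtain ⟨a, ha, b, hb, hab⟩ := Finset.one_lt_card.mp hcard
        simp only [Finset.mem_compl, Finset.mem_image, not_exists] at ha hb
        exact inner_zero f a b hab (fun i => fun h => ha i ⟨Finset.mem_univ i, h⟩)
          (fun i => fun h => hb i ⟨Finset.mem_univ i, h⟩)
    rw [Finset.sum_congr rfl fun f _ => hval f, Finset.sum_boole]
    have hcount : (Finset.univ.filter fun f : Fin (n - 1) → Fin n =>
        Function.Injective f).card = n.descFactorial (n - 1) := by
      rw [← Fintype.card_subtype]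
      rw [Fintype.card_congr (Equiv.subtypeInjectiveEquivEmbedding (Fin (n - 1)) (Fin n))]
      rw [Fintype.card_embedding_eq]
      simp
    rw [hcount]
    have hdesc : n.descFactorial (n - 1) = n.factorial := by
      have h1 : n.descFactorial ((n - 1) + 1) = (n - (n - 1)) * n.descFactorial (n - 1) :=
        Nat.descFactorial_succ n (n - 1)
      have h2 : (n - 1) + 1 = n := by omega
      have h3 : n - (n - 1) = 1 := by omega
      rw [h2, h3, one_mul, Nat.descFactorial_self] at h1
      omega
    rw [hdesc]
end

section
/- Let n ≥ 2 and k ≥ 1. Let ν_1, ν_2, …, ν_k be probability measures on the symmetric group S_n, each of which is a class measure (i.e., conjugation-invariant: ν_j(τστ^{-1}) = ν_j(σ) for all σ, τ ∈ S_n), and suppose ν_1 is supported on the set of permutations with exactly one fixed point (i.e., ν_1(σ) = 0 whenever fix(σ) ≠ 1). Let μ_k = ν_k ∗ ν_{k−1} ∗ ⋯ ∗ ν_1 be their convolution. Then the expected number of fixed points under μ_k equals one: Σ_{σ ∈ S_n} μ_k(σ) · fix(σ) = 1. (In Markov chain language: a random walk on S_n started at the identity whose first increment is a class measure supported on one-fixed-point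 permutations and whose subsequent increments are arbitrary class measures averages exactly one fixed point at every step.) -/
/-- Convolution of two (signed) measures on a finite group:
`(μ ∗ ν)(g) = Σ_h μ(g h⁻¹) ν(h)`. -/
def conv {G : Type*} [Group G] [Fintype G] (μ ν : G → ℝ) : G → ℝ :=
  fun g => ∑ h : G, μ (g * h⁻¹) * ν h

open Finset Equiv

/-- fixCount as a sum of indicators, in ℝ. -/
lemma fixCount_eq_sum {n : ℕ} (σ : Equiv.Perm (Fin n)) :
    ((fixCount σ : ℝ)) = ∑ x : Fin n, if σ x = x then (1 : ℝ) else 0 := by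
  rw [fixCount, Finset.card_filter]
  push_cast
  rfl

/-- Total mass of a convolution is the product of total masses. -/
lemma conv_sum {G : Type*} [Group G] [Fintype G] (ν μ : G → ℝ) :
    ∑ g : G, conv ν μ g = (∑ g : G, ν g) * (∑ g : G, μ g) := by
  simp only [conv]
  rw [Finset.sum_comm]
  calc ∑ h : G, ∑ g : G, ν (g * h⁻¹) * μ h
      = ∑ h : G, (∑ s : G, ν s) * μ h := by
        refine Finset.sum_congr rfl fun h _ => ?_
        rw [Finset.sum_mul]
        refine (Fintype.sum_bijective (fun s => s * h) (Group.mulRight_bijective h) _ _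
          fun s => ?_).symm
        simp
    _ = (∑ g : G, ν g) * (∑ g : G, μ g) := by rw [← Finset.mul_sum]

/-- 2-transitivity of the symmetric group. -/
lemma exists_perm_two {n : ℕ} {a b a' b' : Fin n} (hab : a ≠ b) (hab' : a' ≠ b') :
    ∃ t : Equiv.Perm (Fin n), t a = a' ∧ t b = b' := by
  refine ⟨Equiv.swap (Equiv.swap a a' b) b' * Equiv.swap a a', ?_, ?_⟩
  · have hc : Equiv.swap a a' b ≠ a' := by
      intro h
      exact hab ((Equiv.swap a a').injective
        (((Equiv.swap_apply_left a a').trans h.symm)).symm).symm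
    simp only [Equiv.Perm.mul_apply, Equiv.swap_apply_left]
    exact Equiv.swap_apply_of_ne_of_ne hc.symm hab'
  · simp only [Equiv.Perm.mul_apply]
    exact Equiv.swap_apply_left _ _

/-- Conjugation invariance of the two-point transition probability. -/
lemma p_conj {n : ℕ} (ν : Equiv.Perm (Fin n) → ℝ)
    (hclass : ∀ σ τ : Equiv.Perm (Fin n), ν (τ * σ * τ⁻¹) = ν σ)
    (t : Equiv.Perm (Fin n)) (a b : Fin n) :
    (∑ s : Equiv.Perm (Fin n), ν s * (if s (t a) = t b then (1 : ℝ) else 0))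
      = ∑ s : Equiv.Perm (Fin n), ν s * (if s a = b then (1 : ℝ) else 0) := by
  have hbij : Function.Bijective (fun s : Equiv.Perm (Fin n) => t * s * t⁻¹) :=
    (MulAut.conj t).bijective
  refine (Fintype.sum_bijective _ hbij _ _ ?_).symm
  intro s
  have h1 : ν (t * s * t⁻¹) = ν s := hclass s t
  have h2 : (t * s * t⁻¹) (t a) = t (s a) := by
    simp [Equiv.Perm.mul_apply]
  rw [h1, h2]
  congr 1
  simp [t.injective.eq_iff]

/-- Key step: convolving by a class probability measure preserves
expected fixed points equal to one. -/
lemma conv_fix {n : ℕ} (hn : 2 ≤ n) (ν μ : Equiv.Perm (Fin n) → ℝ)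
    (hclass : ∀ σ τ : Equiv.Perm (Fin n), ν (τ * σ * τ⁻¹) = ν σ)
    (hνsum : ∑ σ : Equiv.Perm (Fin n), ν σ = 1)
    (hμsum : ∑ σ : Equiv.Perm (Fin n), μ σ = 1)
    (hμfix : ∑ σ : Equiv.Perm (Fin n), μ σ * (fixCount σ : ℝ) = 1) :
    ∑ σ : Equiv.Perm (Fin n), conv ν μ σ * (fixCount σ : ℝ) = 1 := by
  set p : Fin n → Fin n → ℝ :=
    fun a b => ∑ s : Equiv.Perm (Fin n), ν s * (if s a = b then (1 : ℝ) else 0) with hp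
  obtain ⟨a0, b0, hab0⟩ : ∃ a b : Fin n, a ≠ b :=
    ⟨⟨0, by omega⟩, ⟨1, by omega⟩, by simp [Fin.ext_iff]⟩
  set c₁ : ℝ := p a0 a0 with hc₁
  set c₂ : ℝ := p a0 b0 with hc₂
  -- p a a = c₁ for all a
  have hdiag : ∀ a : Fin n, p a a = c₁ := by
    intro a
    have h := p_conj ν hclass (Equiv.swap a0 a) a0 a0
    rw [Equiv.swap_apply_left] at h
    exact h
  -- p a b = c₂ for a ≠ b
  have hoff : ∀ a b : Fin n, a ≠ b → p a b = c₂ := by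
    intro a b hne
    obtain ⟨t, hta, htb⟩ := exists_perm_two hab0 hne
    have h := p_conj ν hclass t a0 b0
    rw [hta, htb] at h
    exact h
  -- row sums: c₁ + (n-1) c₂ = 1
  have hrow : c₁ + ((n : ℝ) - 1) * c₂ = 1 := by
    have h1 : ∑ b : Fin n, p a0 b = 1 := by
      rw [hp, Finset.sum_comm]
      calc ∑ s : Equiv.Perm (Fin n), ∑ b : Fin n, ν s * (if s a0 = b then (1 : ℝ) else 0)
          = ∑ s : Equiv.Perm (Fin n), ν s := by
            refine Finset.sum_congr rfl fun s _ => ?_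
            rw [← Finset.mul_sum]
            simp
        _ = 1 := hνsum
    have h2 : ∑ b : Fin n, p a0 b = c₁ + ((n : ℝ) - 1) * c₂ := by
      rw [← Finset.add_sum_erase _ _ (Finset.mem_univ a0)]
      congr 1
      rw [Finset.sum_congr rfl fun b hb =>
          hoff a0 b (Ne.symm (Finset.mem_erase.mp hb).1)]
      rw [Finset.sum_const, Finset.card_erase_of_mem (Finset.mem_univ a0),
        Finset.card_univ, Fintype.card_fin, nsmul_eq_mul]
      congr 1
      rw [Nat.cast_sub (by omega)]
      norm_num
    rw [← h2, h1]
  -- the conditional expectation of fixCount given the previous position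
  have key : ∀ h : Equiv.Perm (Fin n),
      ∑ s : Equiv.Perm (Fin n), ν s * (fixCount (s * h) : ℝ)
        = (fixCount h : ℝ) * c₁ +
          ((Finset.univ.filter fun x : Fin n => ¬ h x = x).card : ℝ) * c₂ := by
    intro h
    calc ∑ s : Equiv.Perm (Fin n), ν s * (fixCount (s * h) : ℝ)
        = ∑ s : Equiv.Perm (Fin n), ∑ x : Fin n,
            ν s * (if s (h x) = x then (1 : ℝ) else 0) := by
          refine Finset.sum_congr rfl fun s _ => ?_
          rw [fixCount_eq_sum, Finset.mul_sum]
          simp [Equiv.Perm.mul_apply]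
          refine Finset.sum_congr rfl fun x _ => ?_
          split_ifs <;> simp_all
      _ = ∑ x : Fin n, p (h x) x := Finset.sum_comm
      _ = ∑ x : Fin n, (if h x = x then c₁ else c₂) := by
          refine Finset.sum_congr rfl fun x _ => ?_
          by_cases hx : h x = x
          · rw [if_pos hx, hx, hdiag]
          · rw [if_neg hx, hoff _ _ hx]
      _ = _ := by
          rw [Finset.sum_ite, Finset.sum_const, Finset.sum_const, nsmul_eq_mul,
            nsmul_eq_mul, fixCount]
  -- the number of non-fixed points, in ℝ
  have hm : ∀ h : Equiv.Perm (Fin n),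
      ((Finset.univ.filter fun x : Fin n => ¬ h x = x).card : ℝ)
        = (n : ℝ) - (fixCount h : ℝ) := by
    intro h
    have := Finset.card_filter_add_card_filter_not
      (s := (Finset.univ : Finset (Fin n))) (p := fun x => h x = x)
    rw [Finset.card_univ, Fintype.card_fin] at this
    have : fixCount h + (Finset.univ.filter fun x : Fin n => ¬ h x = x).card = n := this
    have := congrArg (fun m : ℕ => (m : ℝ)) this
    push_cast at this
    linarith
  -- main computation
  calc ∑ g : Equiv.Perm (Fin n), conv ν μ g * (fixCount g : ℝ)
      = ∑ g : Equiv.Perm (Fin n), ∑ h : Equiv.Perm (Fin n),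
          ν (g * h⁻¹) * μ h * (fixCount g : ℝ) := by
        refine Finset.sum_congr rfl fun g _ => ?_
        rw [conv, Finset.sum_mul]
    _ = ∑ h : Equiv.Perm (Fin n), ∑ g : Equiv.Perm (Fin n),
          ν (g * h⁻¹) * μ h * (fixCount g : ℝ) := Finset.sum_comm
    _ = ∑ h : Equiv.Perm (Fin n), ∑ s : Equiv.Perm (Fin n),
          ν s * μ h * (fixCount (s * h) : ℝ) := by
        refine Finset.sum_congr rfl fun h _ => ?_
        refine (Fintype.sum_bijective (fun s => s * h) (Group.mulRight_bijective h) _ _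
          fun s => ?_).symm
        simp
    _ = ∑ h : Equiv.Perm (Fin n), μ h *
          ((fixCount h : ℝ) * c₁ +
            ((Finset.univ.filter fun x : Fin n => ¬ h x = x).card : ℝ) * c₂) := by
        refine Finset.sum_congr rfl fun h _ => ?_
        rw [← key h, Finset.mul_sum]
        exact Finset.sum_congr rfl fun s _ => by ring
    _ = ∑ h : Equiv.Perm (Fin n),
          (c₁ * (μ h * (fixCount h : ℝ)) +
            c₂ * ((n : ℝ) * μ h - μ h * (fixCount h : ℝ))) := by
        refine Finset.sum_congr rfl fun h _ => ?_
        rw [hm h]; ring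
    _ = c₁ * (∑ h : Equiv.Perm (Fin n), μ h * (fixCount h : ℝ)) +
          c₂ * ((n : ℝ) * (∑ h : Equiv.Perm (Fin n), μ h) -
            ∑ h : Equiv.Perm (Fin n), μ h * (fixCount h : ℝ)) := by
        rw [Finset.sum_add_distrib, ← Finset.mul_sum, ← Finset.mul_sum,
          Finset.sum_sub_distrib, ← Finset.mul_sum]
    _ = 1 := by rw [hμfix, hμsum]; linarith [hrow]

/-- A random walk on `S_n` whose first increment is a class measure supported on
permutations with exactly one fixed point, and whose subsequent increments are
arbitrary class measures, averages exactly one fixed point at every step. -/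
theorem expected_fixed_points_eq_one (n k : ℕ) (hn : 2 ≤ n) (hk : 1 ≤ k)
    (ν : ℕ → Equiv.Perm (Fin n) → ℝ)
    (hnonneg : ∀ j ∈ Finset.Icc 1 k, ∀ σ : Equiv.Perm (Fin n), 0 ≤ ν j σ)
    (hprob : ∀ j ∈ Finset.Icc 1 k, ∑ σ : Equiv.Perm (Fin n), ν j σ = 1)
    (hclass : ∀ j ∈ Finset.Icc 1 k, ∀ σ τ : Equiv.Perm (Fin n), ν j (τ * σ * τ⁻¹) = ν j σ)
    (hsupp : ∀ σ : Equiv.Perm (Fin n), fixCount σ ≠ 1 → ν 1 σ = 0)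
    (μ : ℕ → Equiv.Perm (Fin n) → ℝ)
    (hμ1 : μ 1 = ν 1)
    (hμ : ∀ j : ℕ, 1 ≤ j → j < k → μ (j + 1) = conv (ν (j + 1)) (μ j)) :
    ∑ σ : Equiv.Perm (Fin n), μ k σ * (fixCount σ : ℝ) = 1 := by
  have main : ∀ j : ℕ, 1 ≤ j → j ≤ k →
      (∑ σ : Equiv.Perm (Fin n), μ j σ = 1) ∧
        (∑ σ : Equiv.Perm (Fin n), μ j σ * (fixCount σ : ℝ) = 1) := by
    intro j h1
    induction j, h1 using Nat.le_induction with
    | base =>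
      intro _
      have h1k : (1 : ℕ) ∈ Finset.Icc 1 k := by
        simp [Finset.mem_Icc, hk]
      constructor
      · rw [hμ1]; exact hprob 1 h1k
      · rw [hμ1]
        have hterm : ∀ σ : Equiv.Perm (Fin n), ν 1 σ * (fixCount σ : ℝ) = ν 1 σ := by
          intro σ
          by_cases h : fixCount σ = 1
          · rw [h]; simp
          · rw [hsupp σ h]; ring
        rw [Finset.sum_congr rfl fun σ _ => hterm σ]
        exact hprob 1 h1k
    | succ j hj ih =>
      intro hjk
      obtain ⟨ihs, ihf⟩ := ih (by omega)
      have hmem : j + 1 ∈ Finset.Icc 1 k := by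
        simp [Finset.mem_Icc]; omega
      rw [hμ j hj (by omega)]
      refine ⟨?_, ?_⟩
      · rw [conv_sum, hprob _ hmem, ihs]; norm_num
      · exact conv_fix hn (ν (j + 1)) (μ j) (hclass _ hmem) (hprob _ hmem) ihs ihf
  exact (main k hk le_rfl).2
end
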